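/- For every α ∈ (0,1), the supremum over z ∈ ℝ of (α·z − f(z)) equals −φ(Φ⁻¹(α)) and is strictly less than 0, where f(z) = z·Φ(z) + φ(z). -/

import Mathlib

open Real MeasureTheory Set Filter Topology

/-- Standard normal density φ(z) = (1/√(2π))·exp(-z²/2). -/
noncomputable def gaussPdf (z : ℝ) : ℝ := (Real.sqrt (2 * Real.pi))⁻¹ * Real.exp (-z ^ 2 / 2)

/-- Standard normal CDF Φ(z) = ∫_{-∞}^z φ(t) dt. -/
noncomputable def gaussCdf (z : ℝ) : ℝ := ∫ t in Set.Iic z, gaussPdf t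

/-- f(z) = z·Φ(z) + φ(z). -/
noncomputable def stdF (z : ℝ) : ℝ := z * gaussCdf z + gaussPdf z

/-- Inverse of the standard normal CDF. -/
noncomputable def gaussCdfInv : ℝ → ℝ := Function.invFun gaussCdf

lemma gaussPdf_pos (z : ℝ) : 0 < gaussPdf z := by
  have : 0 < Real.sqrt (2 * Real.pi) := Real.sqrt_pos.2 (by positivity)
  exact mul_pos (inv_pos.2 this) (Real.exp_pos _)

lemma continuous_gaussPdf : Continuous gaussPdf := by
  unfold gaussPdf; fun_prop

lemma integrable_gaussPdf : Integrable gaussPdf := by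
  have h : Integrable (fun z : ℝ => Real.exp (-(1/2) * z ^ 2)) := integrable_exp_neg_mul_sq (by norm_num)
  have := h.const_mul (Real.sqrt (2 * Real.pi))⁻¹
  refine this.congr ?_
  filter_upwards with z
  unfold gaussPdf
  ring_nf

lemma integral_gaussPdf : ∫ z, gaussPdf z = 1 := by
  have h : ∫ z : ℝ, Real.exp (-(1/2) * z ^ 2) = Real.sqrt (Real.pi / (1/2)) :=
    integral_gaussian (1/2)
  have h2 : ∫ z, gaussPdf z = (Real.sqrt (2 * Real.pi))⁻¹ * ∫ z : ℝ, Real.exp (-(1/2) * z ^ 2) := by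
    rw [← integral_const_mul]
    congr 1; funext z; unfold gaussPdf; ring_nf
  rw [h2, h]
  have : Real.pi / (1/2) = 2 * Real.pi := by ring
  rw [this]
  field_simp

lemma hasDerivAt_gaussCdf (x : ℝ) : HasDerivAt gaussCdf (gaussPdf x) x := by
  have heq : ∀ z, gaussCdf z = gaussCdf 0 + ∫ t in (0:ℝ)..z, gaussPdf t := by
    intro z
    unfold gaussCdf
    have := intervalIntegral.integral_Iic_sub_Iic
      (f := gaussPdf) (μ := volume) (a := 0) (b := z)
      integrable_gaussPdf.integrableOn integrable_gaussPdf.integrableOn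
    linarith
  have hd : HasDerivAt (fun z => gaussCdf 0 + ∫ t in (0:ℝ)..z, gaussPdf t) (gaussPdf x) x := by
    exact (continuous_gaussPdf.integral_hasStrictDerivAt 0 x).hasDerivAt.const_add _
  exact hd.congr_of_eventuallyEq (by filter_upwards with z using heq z)

lemma strictMono_gaussCdf : StrictMono gaussCdf :=
  strictMono_of_hasDerivAt_pos hasDerivAt_gaussCdf gaussPdf_pos

lemma gaussCdf_le_one (z : ℝ) : gaussCdf z ≤ 1 := by
  rw [← integral_gaussPdf]
  exact setIntegral_le_integral integrable_gaussPdf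
    (by filter_upwards with t using (gaussPdf_pos t).le)

lemma tendsto_gaussCdf_atTop : Tendsto gaussCdf atTop (𝓝 1) := by
  have h : Tendsto (fun x : ℝ => ∫ t in Set.Iic x, gaussPdf t) atTop
      (𝓝 (∫ t in ⋃ x : ℝ, Set.Iic x, gaussPdf t)) :=
    tendsto_setIntegral_of_monotone (fun x => measurableSet_Iic)
      (fun a b hab => Iic_subset_Iic.2 hab)
      (integrable_gaussPdf.integrableOn)
  have hU : (⋃ x : ℝ, Set.Iic x) = Set.univ := iUnion_Iic
  rw [hU] at h
  simp only [setIntegral_univ, integral_gaussPdf] at h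
  exact h

lemma tendsto_gaussCdf_atBot : Tendsto gaussCdf atBot (𝓝 0) := by
  have h : Tendsto (fun x : ℝ => ∫ t in Set.Iic (-x), gaussPdf t) atTop
      (𝓝 (∫ t in ⋂ x : ℝ, Set.Iic (-x), gaussPdf t)) := by
    apply tendsto_setIntegral_of_antitone (fun x => measurableSet_Iic)
      (fun a b hab => Iic_subset_Iic.2 (by linarith))
      ⟨0, integrable_gaussPdf.integrableOn⟩
  have hI : (⋂ x : ℝ, Set.Iic (-x)) = ∅ := by
    ext t
    simp only [Set.mem_iInter, Set.mem_Iic, Set.mem_empty_iff_false, iff_false, not_forall]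
    exact ⟨-(t - 1), by push_neg; linarith⟩
  rw [hI] at h
  simp only [Measure.restrict_empty, integral_zero_measure] at h
  have h2 := h.comp tendsto_neg_atBot_atTop
  refine h2.congr fun z => ?_
  simp [Function.comp, gaussCdf]

lemma exists_gaussCdf_eq {α : ℝ} (hα : α ∈ Set.Ioo (0:ℝ) 1) : ∃ z, gaussCdf z = α := by
  obtain ⟨a, ha⟩ := (tendsto_gaussCdf_atBot.eventually_lt_const hα.1).exists
  obtain ⟨b, hb⟩ := (tendsto_gaussCdf_atTop.eventually_const_lt hα.2).exists
  have hab : a ≤ b := by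
    by_contra hc
    push_neg at hc
    have := strictMono_gaussCdf hc
    linarith
  have hcont : ContinuousOn gaussCdf (Set.Icc a b) :=
    (fun x _ => (hasDerivAt_gaussCdf x).continuousAt.continuousWithinAt)
  have := intermediate_value_Icc hab hcont
  obtain ⟨z, _, hz⟩ := this ⟨ha.le, hb.le⟩
  exact ⟨z, hz⟩

lemma gaussCdf_gaussCdfInv {α : ℝ} (hα : α ∈ Set.Ioo (0:ℝ) 1) :
    gaussCdf (gaussCdfInv α) = α :=
  Function.invFun_eq (exists_gaussCdf_eq hα)

lemma hasDerivAt_gaussPdf (x : ℝ) : HasDerivAt gaussPdf (-x * gaussPdf x) x := by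
  have h1 : HasDerivAt (fun z : ℝ => -z ^ 2 / 2) (-x) x := by
    have h := (((hasDerivAt_pow 2 x).neg).div_const 2)
    exact h.congr_deriv (by norm_num; ring)
  have h2 := (h1.exp).const_mul (Real.sqrt (2 * Real.pi))⁻¹
  unfold gaussPdf
  exact h2.congr_deriv (by ring)

lemma hasDerivAt_stdF (x : ℝ) : HasDerivAt stdF (gaussCdf x) x := by
  have h := ((hasDerivAt_id x).mul (hasDerivAt_gaussCdf x)).add (hasDerivAt_gaussPdf x)
  unfold stdF
  exact h.congr_deriv (by simp only [id_eq]; ring)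


theorem stmt_12 (α : ℝ) (hα : α ∈ Set.Ioo (0 : ℝ) 1) :
    IsLUB (Set.range fun z : ℝ => α * z - stdF z) (-(gaussPdf (gaussCdfInv α))) ∧
    -(gaussPdf (gaussCdfInv α)) < 0 := by
  set x := gaussCdfInv α with hxdef
  have hx : gaussCdf x = α := gaussCdf_gaussCdfInv hα
  have hstdFx : stdF x = x * α + gaussPdf x := by rw [stdF, hx]
  -- the auxiliary function h z = stdF z - α * z has minimum at x
  have hkey : ∀ z, stdF x - α * x ≤ stdF z - α * z := by
    have hd : ∀ z, HasDerivAt (fun z => stdF z - α * z) (gaussCdf z - α) z := fun z =>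
      (hasDerivAt_stdF z).sub ((hasDerivAt_id z).const_mul α |>.congr_deriv (by ring))
    intro z
    rcases le_total x z with hle | hle
    · have hmono : MonotoneOn (fun z => stdF z - α * z) (Set.Ici x) := by
        apply monotoneOn_of_hasDerivWithinAt_nonneg (convex_Ici x)
          (fun t _ => (hd t).continuousAt.continuousWithinAt)
          (fun t _ => (hd t).hasDerivWithinAt)
        intro t ht
        rw [interior_Ici] at ht
        have : gaussCdf x ≤ gaussCdf t := strictMono_gaussCdf.monotone (le_of_lt ht)
        rw [hx] at this
        linarith
      exact hmono (Set.self_mem_Ici) hle hle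
    · have hanti : AntitoneOn (fun z => stdF z - α * z) (Set.Iic x) := by
        apply antitoneOn_of_hasDerivWithinAt_nonpos (convex_Iic x)
          (fun t _ => (hd t).continuousAt.continuousWithinAt)
          (fun t _ => (hd t).hasDerivWithinAt)
        intro t ht
        rw [interior_Iic] at ht
        have : gaussCdf t ≤ gaussCdf x := strictMono_gaussCdf.monotone (le_of_lt ht)
        rw [hx] at this
        linarith
      exact hanti hle (Set.self_mem_Iic) hle
  constructor
  · apply IsGreatest.isLUB
    constructor
    · exact ⟨x, by simp only [hstdFx]; ring⟩
    · rintro y ⟨z, rfl⟩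
      have := hkey z
      rw [hstdFx] at this
      simp only
      linarith
  · have := gaussPdf_pos x
    linarith
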